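/- Let G be a graph on vertex set [n] and set b_{{u}} = 1/n for all vertices u and b_{{u,v}} = 0 for all edges {u,v} ∈ E(G), with F = {{u} : u ∈ V(G)} ∪ E(G). Then the minimum of ∑_{∅≠T⊆[n]} x_T over all nonnegative (x_T)_{T⊆[n]} satisfying ∑_T x_T = 1, ∑_{u∈T} x_T = 1/n for all u, and ∑_{{u,v}⊆T} x_T = 0 for all edges {u,v}, equals χ_f(G)/n, where χ_f(G) is the fractional chromatic number of G. -/

import Mathlib

open scoped Classical
open Finset

namespace Stmt15Aux

variable {n : ℕ}

/-- coverage of a vertex -/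
noncomputable def cov (y : Finset (Fin n) → ℝ) (u : Fin n) : ℝ :=
  ∑ I ∈ Finset.univ.filter (fun I : Finset (Fin n) => u ∈ I), y I

lemma insert_bij (u : Fin n) (A B : Finset (Finset (Fin n))) (y : Finset (Fin n) → ℝ)
    (hA : ∀ I ∈ A, u ∉ I) (hB : ∀ I ∈ B, u ∈ I)
    (hAB : ∀ I : Finset (Fin n), u ∉ I → (insert u I ∈ B ↔ I ∈ A)) :
    ∑ I ∈ A, y (insert u I) = ∑ I ∈ B, y I := by
  refine Finset.sum_nbij' (insert u) (fun I => I.erase u) ?_ ?_ ?_ ?_ ?_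
  · intro I hI
    exact (hAB I (hA I hI)).mpr hI
  · intro I hI
    have h1 : u ∉ I.erase u := notMem_erase u I
    have h2 := hAB (I.erase u) h1
    rw [insert_erase (hB I hI)] at h2
    exact h2.mp hI
  · intro I hI
    exact erase_insert (hA I hI)
  · intro I hI
    exact insert_erase (hB I hI)
  · intro I hI
    rfl

lemma step (G : SimpleGraph (Fin n)) (y : Finset (Fin n) → ℝ) (hnn : ∀ I, 0 ≤ y I)
    (hind : ∀ I : Finset (Fin n), (¬ ∀ a ∈ I, ∀ b ∈ I, ¬ G.Adj a b) → y I = 0)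
    (u : Fin n) (hs : 1 ≤ cov y u) :
    ∃ y' : Finset (Fin n) → ℝ, (∀ I, 0 ≤ y' I) ∧
      (∀ I : Finset (Fin n), (¬ ∀ a ∈ I, ∀ b ∈ I, ¬ G.Adj a b) → y' I = 0) ∧
      cov y' u = 1 ∧ (∀ v, v ≠ u → cov y' v = cov y v) ∧ (∑ I, y' I) = ∑ I, y I := by
  set s := cov y u with hsdef
  have hs0 : (0:ℝ) < s := lt_of_lt_of_le one_pos hs
  have hfrac : (0:ℝ) ≤ 1 - 1/s := by
    have h1 : 1/s ≤ 1 := by rw [div_le_one hs0]; exact hs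
    linarith
  set y' : Finset (Fin n) → ℝ :=
    fun I => if u ∈ I then y I / s else y I + (1 - 1/s) * y (insert u I) with hy'def
  have hy'mem : ∀ I : Finset (Fin n), u ∈ I → y' I = y I / s := by
    intro I hI; simp [hy'def, hI]
  have hy'nmem : ∀ I : Finset (Fin n), u ∉ I →
      y' I = y I + (1 - 1/s) * y (insert u I) := by
    intro I hI; simp [hy'def, hI]
  refine ⟨y', ?_, ?_, ?_, ?_, ?_⟩
  · intro I
    by_cases h : u ∈ I
    · rw [hy'mem I h]; exact div_nonneg (hnn I) hs0.le
    · rw [hy'nmem I h]; exact add_nonneg (hnn I) (mul_nonneg hfrac (hnn _))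
  · intro I hI
    by_cases h : u ∈ I
    · rw [hy'mem I h, hind I hI, zero_div]
    · have h2 : ¬ ∀ a ∈ insert u I, ∀ b ∈ insert u I, ¬ G.Adj a b := by
        intro hcon
        exact hI (fun a ha b hb => hcon a (mem_insert_of_mem ha) b (mem_insert_of_mem hb))
      rw [hy'nmem I h, hind I hI, hind _ h2, mul_zero, add_zero]
  · show (∑ I ∈ Finset.univ.filter (fun I : Finset (Fin n) => u ∈ I), y' I) = 1
    rw [Finset.sum_congr rfl (fun I hI => hy'mem I (Finset.mem_filter.mp hI).2),
      ← Finset.sum_div]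
    exact div_self hs0.ne'
  · intro v hv
    show (∑ I ∈ Finset.univ.filter (fun I : Finset (Fin n) => v ∈ I), y' I)
      = ∑ I ∈ Finset.univ.filter (fun I : Finset (Fin n) => v ∈ I), y I
    set S := Finset.univ.filter (fun I : Finset (Fin n) => v ∈ I) with hSdef
    rw [← Finset.sum_filter_add_sum_filter_not S (fun I : Finset (Fin n) => u ∈ I) y',
      ← Finset.sum_filter_add_sum_filter_not S (fun I : Finset (Fin n) => u ∈ I) y]
    have hA : ∑ I ∈ S.filter (fun I : Finset (Fin n) => u ∈ I), y' I
        = (∑ I ∈ S.filter (fun I : Finset (Fin n) => u ∈ I), y I) / s := by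
      rw [Finset.sum_congr rfl (fun I hI => hy'mem I (Finset.mem_filter.mp hI).2),
        ← Finset.sum_div]
    have hbij : ∑ I ∈ S.filter (fun I : Finset (Fin n) => ¬ u ∈ I), y (insert u I)
        = ∑ I ∈ S.filter (fun I : Finset (Fin n) => u ∈ I), y I := by
      refine insert_bij u _ _ y (fun I hI => (Finset.mem_filter.mp hI).2)
        (fun I hI => (Finset.mem_filter.mp hI).2) ?_
      intro I hIu
      constructor
      · intro h
        have hvI : v ∈ insert u I := (Finset.mem_filter.mp (Finset.mem_filter.mp h).1).2
        have hv2 : v ∈ I := by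
          rcases Finset.mem_insert.mp hvI with h' | h'
          · exact absurd h' hv
          · exact h'
        exact Finset.mem_filter.mpr ⟨Finset.mem_filter.mpr ⟨Finset.mem_univ I, hv2⟩, hIu⟩
      · intro h
        have hv2 : v ∈ I := (Finset.mem_filter.mp (Finset.mem_filter.mp h).1).2
        exact Finset.mem_filter.mpr ⟨Finset.mem_filter.mpr ⟨Finset.mem_univ _,
          Finset.mem_insert_of_mem hv2⟩, Finset.mem_insert_self u I⟩
    have hB : ∑ I ∈ S.filter (fun I : Finset (Fin n) => ¬ u ∈ I), y' I
        = (∑ I ∈ S.filter (fun I : Finset (Fin n) => ¬ u ∈ I), y I)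
          + (1 - 1/s) * ∑ I ∈ S.filter (fun I : Finset (Fin n) => u ∈ I), y I := by
      rw [Finset.sum_congr rfl (fun I hI => hy'nmem I (Finset.mem_filter.mp hI).2),
        Finset.sum_add_distrib, ← Finset.mul_sum, hbij]
    rw [hA, hB]
    set A := ∑ I ∈ S.filter (fun I : Finset (Fin n) => u ∈ I), y I
    set B := ∑ I ∈ S.filter (fun I : Finset (Fin n) => ¬ u ∈ I), y I
    field_simp
    ring
  · rw [← Finset.sum_filter_add_sum_filter_not univ (fun I : Finset (Fin n) => u ∈ I) y',
      ← Finset.sum_filter_add_sum_filter_not univ (fun I : Finset (Fin n) => u ∈ I) y]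
    have hA : ∑ I ∈ univ.filter (fun I : Finset (Fin n) => u ∈ I), y' I
        = (∑ I ∈ univ.filter (fun I : Finset (Fin n) => u ∈ I), y I) / s := by
      rw [Finset.sum_congr rfl (fun I hI => hy'mem I (Finset.mem_filter.mp hI).2),
        ← Finset.sum_div]
    have hbij : ∑ I ∈ univ.filter (fun I : Finset (Fin n) => ¬ u ∈ I), y (insert u I)
        = ∑ I ∈ univ.filter (fun I : Finset (Fin n) => u ∈ I), y I := by
      refine insert_bij u _ _ y (fun I hI => (Finset.mem_filter.mp hI).2)
        (fun I hI => (Finset.mem_filter.mp hI).2) ?_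
      intro I hIu
      simp [hIu]
    have hB : ∑ I ∈ univ.filter (fun I : Finset (Fin n) => ¬ u ∈ I), y' I
        = (∑ I ∈ univ.filter (fun I : Finset (Fin n) => ¬ u ∈ I), y I)
          + (1 - 1/s) * ∑ I ∈ univ.filter (fun I : Finset (Fin n) => u ∈ I), y I := by
      rw [Finset.sum_congr rfl (fun I hI => hy'nmem I (Finset.mem_filter.mp hI).2),
        Finset.sum_add_distrib, ← Finset.mul_sum, hbij]
    rw [hA, hB]
    set A := ∑ I ∈ univ.filter (fun I : Finset (Fin n) => u ∈ I), y I
    set B := ∑ I ∈ univ.filter (fun I : Finset (Fin n) => ¬ u ∈ I), y I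
    field_simp
    ring

lemma adjust (G : SimpleGraph (Fin n)) (s : Finset (Fin n)) :
    ∀ y : Finset (Fin n) → ℝ, (∀ I, 0 ≤ y I) →
    (∀ I : Finset (Fin n), (¬ ∀ a ∈ I, ∀ b ∈ I, ¬ G.Adj a b) → y I = 0) →
    (∀ u, 1 ≤ cov y u) →
    ∃ y' : Finset (Fin n) → ℝ, (∀ I, 0 ≤ y' I) ∧
      (∀ I : Finset (Fin n), (¬ ∀ a ∈ I, ∀ b ∈ I, ¬ G.Adj a b) → y' I = 0) ∧
      (∀ u, 1 ≤ cov y' u) ∧ (∀ u ∈ s, cov y' u = 1) ∧ (∑ I, y' I) = ∑ I, y I := by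
  induction s using Finset.induction_on with
  | empty =>
    intro y h1 h2 h3
    exact ⟨y, h1, h2, h3, by simp, rfl⟩
  | @insert a s ha IH =>
    intro y h1 h2 h3
    obtain ⟨y', H1, H2, H3, H4, H5⟩ := IH y h1 h2 h3
    obtain ⟨y'', K1, K2, K3, K4, K5⟩ := step G y' H1 H2 a (H3 a)
    refine ⟨y'', K1, K2, ?_, ?_, by rw [K5, H5]⟩
    · intro u
      by_cases hu : u = a
      · subst hu; rw [K3]
      · rw [K4 u hu]; exact H3 u
    · intro u hu
      rcases Finset.mem_insert.mp hu with h | h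
      · subst h; exact K3
      · have hua : u ≠ a := by rintro rfl; exact ha h
        rw [K4 u hua]; exact H4 u h

end Stmt15Aux

/-- The minimum union probability for the instance built from a graph `G`
(`b_{u} = 1/n`, `b_{uv} = 0` on edges) equals `χ_f(G)/n`. -/
theorem stmt15 (n : ℕ) (hn : 0 < n) (G : SimpleGraph (Fin n)) :
    sInf {c : ℝ | ∃ x : Finset (Fin n) → ℝ,
        (∀ T, 0 ≤ x T) ∧ (∑ T, x T) = 1 ∧
        (∀ u : Fin n,
          ∑ T ∈ Finset.univ.filter (fun T : Finset (Fin n) => u ∈ T), x T = 1 / n) ∧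
        (∀ u v : Fin n, G.Adj u v →
          ∑ T ∈ Finset.univ.filter (fun T : Finset (Fin n) => u ∈ T ∧ v ∈ T), x T = 0) ∧
        c = ∑ T ∈ Finset.univ.filter (fun T : Finset (Fin n) => T.Nonempty), x T} =
    (sInf {c : ℝ | ∃ y : Finset (Fin n) → ℝ,
        (∀ I, 0 ≤ y I) ∧
        (∀ I : Finset (Fin n),
          ¬(I.Nonempty ∧ ∀ u ∈ I, ∀ v ∈ I, ¬G.Adj u v) → y I = 0) ∧
        (∀ u : Fin n,
          1 ≤ ∑ I ∈ Finset.univ.filter (fun I : Finset (Fin n) => u ∈ I), y I) ∧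
        c = ∑ I, y I}) / n := by
  have hn0 : (0:ℝ) < n := by exact_mod_cast hn
  set S1 : Set ℝ := {c : ℝ | ∃ x : Finset (Fin n) → ℝ,
        (∀ T, 0 ≤ x T) ∧ (∑ T, x T) = 1 ∧
        (∀ u : Fin n,
          ∑ T ∈ Finset.univ.filter (fun T : Finset (Fin n) => u ∈ T), x T = 1 / n) ∧
        (∀ u v : Fin n, G.Adj u v →
          ∑ T ∈ Finset.univ.filter (fun T : Finset (Fin n) => u ∈ T ∧ v ∈ T), x T = 0) ∧
        c = ∑ T ∈ Finset.univ.filter (fun T : Finset (Fin n) => T.Nonempty), x T} with hS1def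
  set S2 : Set ℝ := {c : ℝ | ∃ y : Finset (Fin n) → ℝ,
        (∀ I, 0 ≤ y I) ∧
        (∀ I : Finset (Fin n),
          ¬(I.Nonempty ∧ ∀ u ∈ I, ∀ v ∈ I, ¬G.Adj u v) → y I = 0) ∧
        (∀ u : Fin n,
          1 ≤ ∑ I ∈ Finset.univ.filter (fun I : Finset (Fin n) => u ∈ I), y I) ∧
        c = ∑ I, y I} with hS2def
  have hsing : ∀ u : Fin n,
      (Finset.univ.filter (fun T : Finset (Fin n) => u ∈ T ∧ T.card = 1))
        = {({u} : Finset (Fin n))} := by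
    intro u
    ext T
    simp only [Finset.mem_filter, Finset.mem_univ, true_and, Finset.mem_singleton]
    constructor
    · rintro ⟨hu, hc⟩
      obtain ⟨a, rfl⟩ := Finset.card_eq_one.mp hc
      rw [Finset.mem_singleton] at hu
      rw [hu]
    · rintro rfl
      exact ⟨Finset.mem_singleton_self u, Finset.card_singleton u⟩
  have htot : ∑ T ∈ Finset.univ.filter (fun T : Finset (Fin n) => T.card = 1), (1/n : ℝ) = 1 := by
    rw [Finset.sum_const]
    have himg : (Finset.univ.filter (fun T : Finset (Fin n) => T.card = 1))
        = Finset.univ.image (fun u : Fin n => ({u} : Finset (Fin n))) := by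
      ext T
      simp [Finset.card_eq_one, eq_comm]
    rw [himg, Finset.card_image_of_injective _ Finset.singleton_injective, Finset.card_univ,
      Fintype.card_fin]
    simp [hn0.ne']
  -- S1 contains 1 via uniform distribution on singletons
  have hS1ne : S1.Nonempty := by
    refine ⟨1, fun T => if T.card = 1 then (1/n : ℝ) else 0, fun T => by positivity,
      ?_, ?_, ?_, ?_⟩
    · rw [← Finset.sum_filter]
      exact htot
    · intro u
      rw [← Finset.sum_filter, Finset.filter_filter, hsing u, Finset.sum_singleton]
    · intro u v huv
      rw [← Finset.sum_filter, Finset.filter_filter]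
      have hempty : Finset.univ.filter
          (fun T : Finset (Fin n) => (u ∈ T ∧ v ∈ T) ∧ T.card = 1) = ∅ := by
        ext T
        simp only [Finset.mem_filter, Finset.mem_univ, true_and, Finset.notMem_empty, iff_false]
        rintro ⟨⟨hu, hv⟩, hc⟩
        obtain ⟨a, rfl⟩ := Finset.card_eq_one.mp hc
        rw [Finset.mem_singleton] at hu hv
        exact G.ne_of_adj huv (hu.trans hv.symm)
      rw [hempty, Finset.sum_empty]
    · rw [← Finset.sum_filter, Finset.filter_filter]
      have hh : Finset.univ.filter (fun T : Finset (Fin n) => T.Nonempty ∧ T.card = 1)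
          = Finset.univ.filter (fun T : Finset (Fin n) => T.card = 1) := by
        ext T
        simp only [Finset.mem_filter, Finset.mem_univ, true_and, and_iff_right_iff_imp]
        intro hc
        exact Finset.card_pos.mp (by omega)
      rw [hh, htot]
  -- S2 contains n via indicator of singletons
  have hS2ne : S2.Nonempty := by
    refine ⟨∑ I : Finset (Fin n), (if I.card = 1 then (1:ℝ) else 0),
      fun I => if I.card = 1 then (1:ℝ) else 0, fun I => by positivity, ?_, ?_, rfl⟩
    · intro I hI
      have hc : ¬ I.card = 1 := by
        intro hc
        obtain ⟨a, rfl⟩ := Finset.card_eq_one.mp hc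
        refine hI ⟨Finset.singleton_nonempty a, ?_⟩
        intro w hw z hz
        rw [Finset.mem_singleton] at hw hz
        rw [hw, hz]
        exact G.loopless.irrefl a
      exact if_neg hc
    · intro u
      rw [← Finset.sum_filter, Finset.filter_filter, hsing u, Finset.sum_singleton]
  have hS1bdd : BddBelow S1 := by
    refine ⟨0, fun c hc => ?_⟩
    obtain ⟨x, hx0, -, -, -, rfl⟩ := hc
    exact Finset.sum_nonneg (fun T _ => hx0 T)
  have hS2bdd : BddBelow S2 := by
    refine ⟨0, fun c hc => ?_⟩
    obtain ⟨y, hy0, -, -, rfl⟩ := hc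
    exact Finset.sum_nonneg (fun I _ => hy0 I)
  apply le_antisymm
  · -- sInf S1 ≤ sInf S2 / n
    rw [le_div_iff₀ hn0]
    apply le_csInf hS2ne
    intro c hc
    obtain ⟨y, hy0, hysupp, hycov, rfl⟩ := hc
    obtain ⟨y', H1, H2, H3, H4, H5⟩ := Stmt15Aux.adjust G Finset.univ y hy0
      (fun I hI => hysupp I (fun h => hI h.2)) hycov
    set K := ∑ T ∈ Finset.univ.filter (fun T : Finset (Fin n) => T.Nonempty), y' T with hKdef
    have hK0 : 0 ≤ K := Finset.sum_nonneg (fun T _ => H1 T)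
    have hdouble : ∑ T : Finset (Fin n), (T.card : ℝ) * y' T = n := by
      have h1 : ∀ T : Finset (Fin n),
          (T.card : ℝ) * y' T = ∑ u : Fin n, (if u ∈ T then y' T else 0) := by
        intro T
        rw [Finset.sum_ite_mem, Finset.univ_inter, Finset.sum_const, nsmul_eq_mul]
      calc ∑ T : Finset (Fin n), (T.card : ℝ) * y' T
          = ∑ T : Finset (Fin n), ∑ u : Fin n, (if u ∈ T then y' T else 0) :=
            Finset.sum_congr rfl (fun T _ => h1 T)
        _ = ∑ u : Fin n, ∑ T : Finset (Fin n), (if u ∈ T then y' T else 0) :=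
            Finset.sum_comm
        _ = ∑ u : Fin n, Stmt15Aux.cov y' u :=
            Finset.sum_congr rfl (fun u _ => (Finset.sum_filter _ _).symm)
        _ = ∑ _u : Fin n, (1:ℝ) :=
            Finset.sum_congr rfl (fun u _ => H4 u (Finset.mem_univ u))
        _ = n := by simp
    have hKn : K ≤ n := by
      calc K ≤ ∑ T ∈ Finset.univ.filter (fun T : Finset (Fin n) => T.Nonempty),
            (T.card : ℝ) * y' T := by
            apply Finset.sum_le_sum
            intro T hT
            have hT1 : (1:ℝ) ≤ T.card := by
              have := Finset.card_pos.mpr (Finset.mem_filter.mp hT).2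
              exact_mod_cast this
            nlinarith [H1 T]
        _ ≤ ∑ T : Finset (Fin n), (T.card : ℝ) * y' T := by
            apply Finset.sum_le_sum_of_subset_of_nonneg (Finset.filter_subset _ _)
            intro T _ _
            have := H1 T
            positivity
        _ = n := hdouble
    have hKley : K ≤ ∑ I, y I := by
      rw [← H5]
      exact Finset.sum_le_sum_of_subset_of_nonneg (Finset.filter_subset _ _)
        (fun T _ _ => H1 T)
    set x : Finset (Fin n) → ℝ :=
      fun T => if T = (∅ : Finset (Fin n)) then 1 - K / n else y' T / n with hxdef
    have hxe : x (∅ : Finset (Fin n)) = 1 - K / n := by simp [hxdef]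
    have hxne : ∀ T : Finset (Fin n), T ≠ ∅ → x T = y' T / n := by
      intro T hT; simp [hxdef, hT]
    have hmem : K / n ∈ S1 := by
      refine ⟨x, ?_, ?_, ?_, ?_, ?_⟩
      · intro T
        by_cases h : T = ∅
        · subst h; rw [hxe]
          have : K / n ≤ 1 := by rw [div_le_one hn0]; exact hKn
          linarith
        · rw [hxne T h]
          exact div_nonneg (H1 T) hn0.le
      · rw [← Finset.add_sum_erase _ _ (Finset.mem_univ (∅ : Finset (Fin n)))]
        have herase : (Finset.univ : Finset (Finset (Fin n))).erase ∅
            = Finset.univ.filter (fun T : Finset (Fin n) => T.Nonempty) := by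
          ext T
          simp [Finset.nonempty_iff_ne_empty]
        have h2 : ∑ T ∈ (Finset.univ : Finset (Finset (Fin n))).erase ∅, x T = K / n := by
          rw [herase, Finset.sum_congr rfl (fun T hT => hxne T
            (Finset.nonempty_iff_ne_empty.mp (Finset.mem_filter.mp hT).2)),
            ← Finset.sum_div]
        rw [hxe, h2]
        ring
      · intro u
        have h1 : ∀ T ∈ Finset.univ.filter (fun T : Finset (Fin n) => u ∈ T),
            x T = y' T / n :=
          fun T hT => hxne T (Finset.ne_empty_of_mem (Finset.mem_filter.mp hT).2)
        have hcovu : (∑ T ∈ Finset.univ.filter (fun T : Finset (Fin n) => u ∈ T), y' T) = 1 :=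
          H4 u (Finset.mem_univ u)
        rw [Finset.sum_congr rfl h1, ← Finset.sum_div, hcovu]
      · intro u v huv
        apply Finset.sum_eq_zero
        intro T hT
        obtain ⟨hu, hv⟩ := (Finset.mem_filter.mp hT).2
        rw [hxne T (Finset.ne_empty_of_mem hu),
          H2 T (fun hall => hall u hu v hv huv), zero_div]
      · rw [Finset.sum_congr rfl (fun T hT => hxne T
          (Finset.nonempty_iff_ne_empty.mp (Finset.mem_filter.mp hT).2)),
          ← Finset.sum_div]
    have h3 : sInf S1 ≤ K / n := csInf_le hS1bdd hmem
    calc sInf S1 * n ≤ (K / n) * n := by nlinarith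
      _ = K := by field_simp
      _ ≤ ∑ I, y I := hKley
  · -- sInf S2 / n ≤ sInf S1
    apply le_csInf hS1ne
    intro c hc
    obtain ⟨x, hx0, hxtot, hxcov, hxedge, rfl⟩ := hc
    set y : Finset (Fin n) → ℝ := fun I => if I.Nonempty then (n:ℝ) * x I else 0 with hydef
    have hyne : ∀ I : Finset (Fin n), I.Nonempty → y I = (n:ℝ) * x I := by
      intro I h; simp [hydef, h]
    have hye : ∀ I : Finset (Fin n), ¬ I.Nonempty → y I = 0 := by
      intro I h; simp [hydef, h]
    have hmem : (∑ I, y I) ∈ S2 := by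
      refine ⟨y, ?_, ?_, ?_, rfl⟩
      · intro I
        by_cases h : I.Nonempty
        · rw [hyne I h]; exact mul_nonneg hn0.le (hx0 I)
        · rw [hye I h]
      · intro I hI
        by_cases h : I.Nonempty
        · rw [hyne I h]
          have hni : ¬ ∀ u ∈ I, ∀ v ∈ I, ¬ G.Adj u v := fun hcon => hI ⟨h, hcon⟩
          push_neg at hni
          obtain ⟨u, hu, v, hv, huv⟩ := hni
          have hxI : x I = 0 :=
            (Finset.sum_eq_zero_iff_of_nonneg (fun T _ => hx0 T)).mp (hxedge u v huv) I
              (Finset.mem_filter.mpr ⟨Finset.mem_univ I, hu, hv⟩)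
          rw [hxI, mul_zero]
        · exact hye I h
      · intro u
        have h1 : ∀ I ∈ Finset.univ.filter (fun I : Finset (Fin n) => u ∈ I),
            y I = (n:ℝ) * x I :=
          fun I hI => hyne I ⟨u, (Finset.mem_filter.mp hI).2⟩
        rw [Finset.sum_congr rfl h1, ← Finset.mul_sum, hxcov u, mul_one_div,
          div_self hn0.ne']
    have h2 : sInf S2 ≤ ∑ I, y I := csInf_le hS2bdd hmem
    have h3 : (∑ I, y I)
        = n * ∑ T ∈ Finset.univ.filter (fun T : Finset (Fin n) => T.Nonempty), x T := by
      rw [hydef, ← Finset.sum_filter, Finset.mul_sum]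
    rw [div_le_iff₀ hn0]
    rw [h3] at h2
    linarith [h2]
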